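/- arXiv:2512.01376 — 2 statements merged into one kernel-verified Lean document; each statement's English description precedes it below -/
import Mathlib

section
/- Let m ≥ 1 be a natural number and σ > 1/m a real number. Then the series ∑ n^{-σ}, taken over natural numbers n ≥ 1 such that every prime p dividing n satisfies p^m ∣ n, converges, and it equals the Euler product ∏_p (1 + 1/(p^{mσ} - p^{(m-1)σ})). -/
open Real Finset

namespace MfullAux

/-- The predicate: `n` is a positive `m`-full number. -/
def P (m n : ℕ) : Prop := 1 ≤ n ∧ ∀ p : ℕ, p.Prime → p ∣ n → p ^ m ∣ n

theorem P_one (m : ℕ) : P m 1 :=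
  ⟨le_refl 1, fun p hp hd => absurd (Nat.le_of_dvd one_pos hd) (by
    have := hp.two_le; omega)⟩

theorem P_mul_iff {m a b : ℕ} (hab : Nat.Coprime a b) : P m (a * b) ↔ P m a ∧ P m b := by
  constructor
  · rintro ⟨hpos, hfull⟩
    have ha : 1 ≤ a := Nat.pos_of_ne_zero (fun h => by simp [h] at hpos)
    have hb : 1 ≤ b := Nat.pos_of_ne_zero (fun h => by simp [h] at hpos)
    refine ⟨⟨ha, fun p hp hd => ?_⟩, ⟨hb, fun p hp hd => ?_⟩⟩
    · have hpb : Nat.Coprime p b := Nat.Coprime.coprime_dvd_left hd hab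
      exact (Nat.Coprime.pow_left m hpb).dvd_of_dvd_mul_right
        (hfull p hp (hd.mul_right b))
    · have hpa : Nat.Coprime p a := (Nat.Coprime.coprime_dvd_right hd hab).symm
      exact (Nat.Coprime.pow_left m hpa).dvd_of_dvd_mul_left
        (hfull p hp (hd.mul_left a))
  · rintro ⟨⟨ha, hfa⟩, ⟨hb, hfb⟩⟩
    refine ⟨Nat.one_le_iff_ne_zero.mpr (Nat.mul_ne_zero (by omega) (by omega)), ?_⟩
    intro p hp hd
    rcases (Nat.Prime.dvd_mul hp).mp hd with h | h
    · exact Dvd.dvd.mul_right (hfa p hp h) b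
    · exact Dvd.dvd.mul_left (hfb p hp h) a

theorem P_pow {m p : ℕ} (hp : p.Prime) {e : ℕ} (he : m ≤ e) : P m (p ^ e) := by
  refine ⟨Nat.one_le_iff_ne_zero.mpr (pow_ne_zero e hp.pos.ne'), ?_⟩
  intro q hq hd
  have hqp : q = p := (Nat.prime_dvd_prime_iff_eq hq hp).mp (hq.dvd_of_dvd_pow hd)
  subst hqp
  exact pow_dvd_pow q he

theorem not_P_pow {m p : ℕ} (hp : p.Prime) {e : ℕ} (h1 : 1 ≤ e) (he : e < m) :
    ¬ P m (p ^ e) := by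
  rintro ⟨-, hfull⟩
  have hd : p ∣ p ^ e := dvd_pow_self p (by omega)
  have := (Nat.pow_dvd_pow_iff_le_right hp.one_lt).mp (hfull p hp hd)
  omega

end MfullAux

open MfullAux

/-- For `m ≥ 1` and real `σ > 1/m`, the series `∑ n^{-σ}` over `m`-full numbers converges
and equals the Euler product `∏_p (1 + 1/(p^{mσ} - p^{(m-1)σ}))`. -/
theorem mfull_sum_eq_euler_product (m : ℕ) (hm : 1 ≤ m) (σ : ℝ) (hσ : 1 / m < σ) :
    Summable (fun n : {n : ℕ // 1 ≤ n ∧ ∀ p : ℕ, p.Prime → p ∣ n → p ^ m ∣ n} =>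
      ((n : ℕ) : ℝ) ^ (-σ)) ∧
    Multipliable (fun p : Nat.Primes =>
      (1 + 1 / ((p : ℝ) ^ (m * σ) - (p : ℝ) ^ ((m - 1 : ℕ) * σ)))) ∧
    (∑' n : {n : ℕ // 1 ≤ n ∧ ∀ p : ℕ, p.Prime → p ∣ n → p ^ m ∣ n}, ((n : ℕ) : ℝ) ^ (-σ))
      = ∏' p : Nat.Primes, (1 + 1 / ((p : ℝ) ^ (m * σ) - (p : ℝ) ^ ((m - 1 : ℕ) * σ))) := by
  have hm0 : (0 : ℝ) < m := by exact_mod_cast hm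
  have hσ0 : 0 < σ := lt_trans (by positivity) hσ
  have hmσ : 1 < (m : ℝ) * σ := by
    have h' := (div_lt_iff₀ hm0).mp hσ
    have h'' := mul_comm (m : ℝ) σ
    linarith
  -- the set of m-full numbers and the associated multiplicative function
  set S : Set ℕ := {n | 1 ≤ n ∧ ∀ p : ℕ, p.Prime → p ∣ n → p ^ m ∣ n} with hS
  have hSP : ∀ n, n ∈ S ↔ P m n := fun n => Iff.rfl
  set f : ℕ → ℝ := S.indicator (fun n => (n : ℝ) ^ (-σ)) with hf
  have hf₀ : f 0 = 0 := by
    apply Set.indicator_of_notMem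
    intro h
    exact absurd h.1 (by omega)
  have hf₁ : f 1 = 1 := by
    rw [hf, Set.indicator_of_mem ((hSP 1).mpr (P_one m))]
    simp
  have hfnn : ∀ n, 0 ≤ f n := fun n =>
    Set.indicator_nonneg (fun k _ => Real.rpow_nonneg (Nat.cast_nonneg k) _) n
  have hmul : ∀ {a b : ℕ}, Nat.Coprime a b → f (a * b) = f a * f b := by
    intro a b hab
    by_cases hA : P m a
    · by_cases hB : P m b
      · rw [hf, Set.indicator_of_mem ((hSP _).mpr ((P_mul_iff hab).mpr ⟨hA, hB⟩)),
          Set.indicator_of_mem ((hSP _).mpr hA), Set.indicator_of_mem ((hSP _).mpr hB)]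
        push_cast
        exact Real.mul_rpow (Nat.cast_nonneg a) (Nat.cast_nonneg b)
      · have hnot : (a * b) ∉ S := fun h => hB ((P_mul_iff hab).mp ((hSP _).mp h)).2
        have hnB : b ∉ S := fun h => hB ((hSP _).mp h)
        rw [hf, Set.indicator_of_notMem hnot, Set.indicator_of_notMem hnB, mul_zero]
    · have hnot : (a * b) ∉ S := fun h => hA ((P_mul_iff hab).mp ((hSP _).mp h)).1
      have hnA : a ∉ S := fun h => hA ((hSP _).mp h)
      rw [hf, Set.indicator_of_notMem hnot, Set.indicator_of_notMem hnA, zero_mul]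
  -- basic facts about p^{-σ}
  have hppos : ∀ {p : ℕ}, p.Prime → (0 : ℝ) < p := fun hp => by exact_mod_cast hp.pos
  have hxlt : ∀ {p : ℕ}, p.Prime → (p : ℝ) ^ (-σ) < 1 := fun {p} hp =>
    Real.rpow_lt_one_of_one_lt_of_neg (by exact_mod_cast hp.one_lt) (by linarith)
  have hxnn : ∀ {p : ℕ}, p.Prime → (0 : ℝ) ≤ (p : ℝ) ^ (-σ) := fun {p} hp =>
    Real.rpow_nonneg (le_of_lt (hppos hp)) _
  have hpow : ∀ {p : ℕ}, p.Prime → ∀ e : ℕ, ((p ^ e : ℕ) : ℝ) ^ (-σ) = ((p : ℝ) ^ (-σ)) ^ e := by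
    intro p hp e
    push_cast
    rw [← Real.rpow_natCast ((p : ℝ) ^ (-σ)) e, ← Real.rpow_mul (hppos hp).le,
      ← Real.rpow_natCast (p : ℝ) e, ← Real.rpow_mul (hppos hp).le]
    congr 1
    ring
  have hfpe : ∀ {p : ℕ}, p.Prime → ∀ e : ℕ, f (p ^ e) ≤ ((p : ℝ) ^ (-σ)) ^ e := by
    intro p hp e
    rw [hf]
    by_cases h : (p ^ e : ℕ) ∈ S
    · rw [Set.indicator_of_mem h, hpow hp]
    · rw [Set.indicator_of_notMem h]
      exact pow_nonneg (hxnn hp) e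
  have hlocsum : ∀ {p : ℕ}, p.Prime → Summable (fun e : ℕ => f (p ^ e)) := by
    intro p hp
    exact Summable.of_nonneg_of_le (fun e => hfnn _) (hfpe hp)
      (summable_geometric_of_lt_one (hxnn hp) (hxlt hp))
  have hloceq : ∀ {p : ℕ}, p.Prime →
      ∑' e : ℕ, f (p ^ e) = 1 + ((p : ℝ) ^ (-σ)) ^ m / (1 - (p : ℝ) ^ (-σ)) := by
    intro p hp
    rw [← Summable.sum_add_tsum_nat_add m (hlocsum hp)]
    congr 1
    · have hsingle : ∑ e ∈ range m, f (p ^ e) = f (p ^ 0) := by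
        refine Finset.sum_eq_single 0 (fun e he h0 => ?_) (fun h => ?_)
        · rw [hf, Set.indicator_of_notMem]
          intro hmem
          exact not_P_pow hp (by omega) (Finset.mem_range.mp he) ((hSP _).mp hmem)
        · exact absurd (Finset.mem_range.mpr (by omega)) h
      rw [hsingle, pow_zero, hf₁]
    · have heq : ∀ e : ℕ, f (p ^ (e + m)) = ((p : ℝ) ^ (-σ)) ^ e * ((p : ℝ) ^ (-σ)) ^ m := by
        intro e
        rw [hf, Set.indicator_of_mem ((hSP _).mpr (P_pow hp (by omega))), hpow hp, pow_add]
      rw [tsum_congr heq, tsum_mul_right, tsum_geometric_of_lt_one (hxnn hp) (hxlt hp),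
        div_eq_mul_inv, mul_comm]
  -- the closed form of the local factor
  have hfac : ∀ {p : ℕ}, p.Prime →
      1 + ((p : ℝ) ^ (-σ)) ^ m / (1 - (p : ℝ) ^ (-σ))
        = 1 + 1 / ((p : ℝ) ^ ((m : ℝ) * σ) - (p : ℝ) ^ (((m - 1 : ℕ) : ℝ) * σ)) := by
    intro p hp
    obtain ⟨k, rfl⟩ : ∃ k, m = k + 1 := ⟨m - 1, by omega⟩
    have hp0 : (0 : ℝ) < p := hppos hp
    set y : ℝ := (p : ℝ) ^ σ with hy
    have hy1 : 1 < y := (Real.one_lt_rpow_iff_of_pos hp0).mpr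
      (Or.inl ⟨by exact_mod_cast hp.one_lt, hσ0⟩)
    have hyk : (0 : ℝ) < y ^ k := pow_pos (by linarith) k
    have h1 : (p : ℝ) ^ (-σ) = y⁻¹ := Real.rpow_neg hp0.le σ
    have h2 : (p : ℝ) ^ (((k + 1 : ℕ) : ℝ) * σ) = y ^ (k + 1) := by
      rw [hy, ← Real.rpow_natCast ((p : ℝ) ^ σ) (k + 1), ← Real.rpow_mul hp0.le, mul_comm]
    have h3 : (p : ℝ) ^ (((k + 1 - 1 : ℕ) : ℝ) * σ) = y ^ k := by
      have hk : (k + 1 - 1 : ℕ) = k := by omega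
      rw [hk, hy, ← Real.rpow_natCast ((p : ℝ) ^ σ) k, ← Real.rpow_mul hp0.le, mul_comm]
    rw [h1, h2, h3]
    congr 1
    have hy0 : y ≠ 0 := by linarith
    have hd1 : 1 - y⁻¹ ≠ 0 := by
      intro h
      have hinv : y⁻¹ = 1 := by linarith
      rw [inv_eq_one] at hinv
      linarith
    have hd2 : y ^ (k + 1) - y ^ k ≠ 0 := by
      have hlt : y ^ k < y ^ (k + 1) := by
        calc y ^ k = y ^ k * 1 := (mul_one _).symm
        _ < y ^ k * y := (mul_lt_mul_iff_right₀ hyk).mpr hy1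
        _ = y ^ (k + 1) := by ring
      intro h
      rw [sub_eq_zero] at h
      rw [h] at hlt
      exact lt_irrefl _ hlt
    rw [div_eq_div_iff hd1 hd2, one_mul]
    have h4 : y⁻¹ ^ (k + 1) * y ^ (k + 1) = 1 := by
      rw [← mul_pow, inv_mul_cancel₀ hy0, one_pow]
    have h5 : y⁻¹ ^ (k + 1) * y ^ k = y⁻¹ := by
      rw [pow_succ, mul_comm (y⁻¹ ^ k) y⁻¹, mul_assoc, ← mul_pow, inv_mul_cancel₀ hy0,
        one_pow, mul_one]
    calc y⁻¹ ^ (k + 1) * (y ^ (k + 1) - y ^ k)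
        = y⁻¹ ^ (k + 1) * y ^ (k + 1) - y⁻¹ ^ (k + 1) * y ^ k := by ring
      _ = 1 - y⁻¹ := by rw [h4, h5]
  -- summability of f
  have hloc' : ∀ {p : ℕ}, p.Prime → Summable (fun e : ℕ => ‖f (p ^ e)‖) := by
    intro p hp
    exact (hlocsum hp).congr (fun e => (Real.norm_of_nonneg (hfnn _)).symm)
  have hfsum : Summable f := by
    have h2σ : (2 : ℝ) ^ (-σ) < 1 :=
      Real.rpow_lt_one_of_one_lt_of_neg one_lt_two (by linarith)
    have h2σ0 : (0 : ℝ) < 1 - (2 : ℝ) ^ (-σ) := by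
      have : (0:ℝ) ≤ (2:ℝ) ^ (-σ) := Real.rpow_nonneg (by norm_num) _
      linarith
    set c : ℝ := (1 - (2 : ℝ) ^ (-σ))⁻¹ with hc
    have hc0 : 0 ≤ c := le_of_lt (inv_pos.mpr h2σ0)
    set T : ℕ → ℝ := fun p =>
      if p.Prime then ((p : ℝ) ^ (-σ)) ^ m / (1 - (p : ℝ) ^ (-σ)) else 0 with hT
    have hTnn : ∀ p, 0 ≤ T p := by
      intro p
      simp only [hT]
      split_ifs with hp
      · have h1 := hxnn hp
        have h2 := hxlt hp
        have : 0 < 1 - (p : ℝ) ^ (-σ) := by linarith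
        positivity
      · exact le_refl 0
    have hTle : ∀ p, T p ≤ c * (p : ℝ) ^ (-((m : ℝ) * σ)) := by
      intro p
      simp only [hT]
      split_ifs with hp
      · have hp2 : (2 : ℝ) ≤ p := by exact_mod_cast hp.two_le
        have hx2 : (p : ℝ) ^ (-σ) ≤ (2 : ℝ) ^ (-σ) :=
          Real.rpow_le_rpow_of_nonpos two_pos hp2 (by linarith)
        have hd : 1 - (2 : ℝ) ^ (-σ) ≤ 1 - (p : ℝ) ^ (-σ) := by linarith
        have hxm : ((p : ℝ) ^ (-σ)) ^ m = (p : ℝ) ^ (-((m : ℝ) * σ)) := by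
          rw [← Real.rpow_natCast ((p : ℝ) ^ (-σ)) m, ← Real.rpow_mul (hppos hp).le]
          congr 1
          ring
        have hxmnn : 0 ≤ ((p : ℝ) ^ (-σ)) ^ m := pow_nonneg (hxnn hp) m
        calc ((p : ℝ) ^ (-σ)) ^ m / (1 - (p : ℝ) ^ (-σ))
            ≤ ((p : ℝ) ^ (-σ)) ^ m / (1 - (2 : ℝ) ^ (-σ)) :=
              div_le_div_of_nonneg_left hxmnn h2σ0 hd
          _ = c * (p : ℝ) ^ (-((m : ℝ) * σ)) := by rw [hxm, div_eq_inv_mul]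
      · positivity
    have hTsum : Summable T := by
      refine Summable.of_nonneg_of_le hTnn hTle ?_
      exact (Real.summable_nat_rpow.mpr (by linarith)).mul_left c
    set C : ℝ := Real.exp (∑' p, T p) with hC
    apply summable_of_sum_range_le hfnn (c := C)
    intro N
    obtain ⟨hs1, hs2⟩ := EulerProduct.summable_and_hasSum_smoothNumbers_prod_primesBelow_tsum
      hf₁ hmul hloc' N
    have hind : Summable (N.smoothNumbers.indicator f) :=
      summable_subtype_iff_indicator.mp hs2.summable
    have h1 : ∑ i ∈ range N, f i ≤ ∑' n, N.smoothNumbers.indicator f n := by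
      have heq : ∀ i ∈ range N, f i = N.smoothNumbers.indicator f i := by
        intro i hi
        rcases Nat.eq_zero_or_pos i with rfl | hi0
        · simp [Set.indicator_apply, hf₀]
        · rw [Set.indicator_of_mem (Nat.mem_smoothNumbers_of_lt hi0 (Finset.mem_range.mp hi))]
      rw [Finset.sum_congr rfl heq]
      exact Summable.sum_le_tsum (range N)
        (fun i _ => Set.indicator_nonneg (fun k _ => hfnn k) i) hind
    have h2 : ∑' n, N.smoothNumbers.indicator f n
        = ∏ p ∈ N.primesBelow, ∑' e : ℕ, f (p ^ e) := by
      rw [← _root_.tsum_subtype]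
      exact hs2.tsum_eq
    have h3 : ∏ p ∈ N.primesBelow, ∑' e : ℕ, f (p ^ e) ≤ C := by
      calc ∏ p ∈ N.primesBelow, ∑' e : ℕ, f (p ^ e)
          = ∏ p ∈ N.primesBelow, (1 + T p) := by
            refine Finset.prod_congr rfl (fun p hp => ?_)
            have hpp := Nat.prime_of_mem_primesBelow hp
            rw [hloceq hpp]
            simp only [hT, if_pos hpp]
        _ ≤ ∏ p ∈ N.primesBelow, Real.exp (T p) := by
            refine Finset.prod_le_prod (fun p _ => ?_) (fun p _ => ?_)
            · have := hTnn p; linarith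
            · have := Real.add_one_le_exp (T p); linarith
        _ = Real.exp (∑ p ∈ N.primesBelow, T p) := (Real.exp_sum _ _).symm
        _ ≤ C := by
            rw [hC]
            exact Real.exp_le_exp.mpr (Summable.sum_le_tsum _ (fun p _ => hTnn p) hTsum)
    calc ∑ i ∈ range N, f i ≤ ∑' n, N.smoothNumbers.indicator f n := h1
      _ = ∏ p ∈ N.primesBelow, ∑' e : ℕ, f (p ^ e) := h2
      _ ≤ C := h3
  -- the Euler product
  have hfnormsum : Summable (fun n => ‖f n‖) :=
    hfsum.congr (fun n => (Real.norm_of_nonneg (hfnn n)).symm)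
  have main := EulerProduct.eulerProduct_hasProd hf₁ hmul hfnormsum hf₀
  have hfaceq : (fun p : Nat.Primes => ∑' e : ℕ, f ((p : ℕ) ^ e))
      = fun p : Nat.Primes =>
        1 + 1 / ((p : ℝ) ^ ((m : ℝ) * σ) - (p : ℝ) ^ (((m - 1 : ℕ) : ℝ) * σ)) := by
    funext p
    rw [hloceq p.2, hfac p.2]
  rw [hfaceq] at main
  refine ⟨?_, main.multipliable, ?_⟩
  · exact summable_subtype_iff_indicator.mpr hfsum
  · exact (_root_.tsum_subtype S (fun n => (n : ℝ) ^ (-σ))).trans main.tprod_eq.symm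
end

section
/- As real s → 1⁺, the prime zeta function satisfies P(s) = log(1/(s-1)) + O(1); i.e., there exist constants C > 0 and δ > 0 such that |P(s) - log(1/(s-1))| ≤ C for all real s with 1 < s < 1 + δ. -/
open Real Filter Topology

noncomputable def zetaMHom (s : ℝ) (hs : s ≠ 0) : ℕ →*₀ ℝ where
  toFun n := (n : ℝ) ^ (-s)
  map_zero' := by simp [Real.zero_rpow (neg_ne_zero.mpr hs)]
  map_one' := by simp
  map_mul' m n := by
    push_cast
    rw [Real.mul_rpow (Nat.cast_nonneg m) (Nat.cast_nonneg n)]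

lemma prime_rpow_pos (p : Nat.Primes) (s : ℝ) : 0 < ((p : ℕ) : ℝ) ^ (-s) :=
  Real.rpow_pos_of_pos (by exact_mod_cast p.prop.pos) _

lemma prime_rpow_le_half (p : Nat.Primes) {s : ℝ} (hs : 1 ≤ s) :
    ((p : ℕ) : ℝ) ^ (-s) ≤ 1 / 2 := by
  have h2 : (2 : ℝ) ≤ ((p : ℕ) : ℝ) := by exact_mod_cast p.prop.two_le
  calc ((p : ℕ) : ℝ) ^ (-s) ≤ ((p : ℕ) : ℝ) ^ (-1 : ℝ) :=
        Real.rpow_le_rpow_of_exponent_le (by linarith) (by linarith)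
    _ = (((p : ℕ) : ℝ))⁻¹ := by rw [Real.rpow_neg_one]
    _ ≤ 1 / 2 := by rw [one_div]; exact inv_anti₀ (by norm_num) h2

lemma summable_norm_zeta (s : ℝ) (hs : 1 < s) :
    Summable (fun n : ℕ ↦ ‖(n : ℝ) ^ (-s)‖) := by
  have : Summable (fun n : ℕ ↦ (n : ℝ) ^ (-s)) :=
    Real.summable_nat_rpow.mpr (by linarith)
  refine this.congr fun n ↦ ?_
  rw [Real.norm_eq_abs, abs_of_nonneg (Real.rpow_nonneg (Nat.cast_nonneg n) _)]

lemma summable_neg_log (s : ℝ) (hs : 1 < s) :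
    Summable (fun p : Nat.Primes ↦ -Real.log (1 - ((p : ℕ) : ℝ) ^ (-s))) := by
  have hsum : Summable (fun p : Nat.Primes ↦ 2 * ((p : ℕ) : ℝ) ^ (-s)) :=
    (Nat.Primes.summable_rpow.mpr (by linarith)).mul_left 2
  refine Summable.of_nonneg_of_le (fun p ↦ ?_) (fun p ↦ ?_) hsum
  · have h1 : 1 - ((p : ℕ) : ℝ) ^ (-s) ≤ 1 := by linarith [prime_rpow_pos p s]
    simpa using Real.log_nonpos (by linarith [prime_rpow_le_half p hs.le]) h1
  · set x := ((p : ℕ) : ℝ) ^ (-s) with hx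
    have hx0 : 0 < x := prime_rpow_pos p s
    have hxh : x ≤ 1 / 2 := prime_rpow_le_half p hs.le
    have h1x : 0 < 1 - x := by linarith
    have := Real.log_le_sub_one_of_pos (x := (1 - x)⁻¹) (by positivity)
    rw [Real.log_inv] at this
    have hinv : (1 - x)⁻¹ - 1 = x / (1 - x) := by field_simp; ring
    have : -Real.log (1 - x) ≤ x / (1 - x) := by linarith
    refine this.trans ?_
    rw [div_le_iff₀ h1x]
    nlinarith

lemma log_zeta_eq (s : ℝ) (hs : 1 < s) :
    Real.log (∑' n : ℕ, (n : ℝ) ^ (-s)) =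
      ∑' p : Nat.Primes, -Real.log (1 - ((p : ℕ) : ℝ) ^ (-s)) := by
  have hs0 : s ≠ 0 := by linarith
  have hsum := summable_norm_zeta s hs
  have Hp := EulerProduct.eulerProduct_completely_multiplicative_hasProd
    (f := zetaMHom s hs0) hsum
  have hgs := summable_neg_log s hs
  have Hexp := hgs.hasSum.rexp
  have heq : (Real.exp ∘ fun p : Nat.Primes ↦ -Real.log (1 - ((p : ℕ) : ℝ) ^ (-s))) =
      fun p : Nat.Primes ↦ (1 - zetaMHom s hs0 (p : ℕ))⁻¹ := by
    funext p
    have h1x : 0 < 1 - ((p : ℕ) : ℝ) ^ (-s) := by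
      linarith [prime_rpow_le_half p hs.le]
    simp only [Function.comp_apply, Real.exp_neg, Real.exp_log h1x]
    rfl
  rw [heq] at Hexp
  have h2 : rexp (∑' (b : Nat.Primes), -log (1 - ((b:ℕ):ℝ) ^ (-s))) =
      ∑' (n : ℕ), (n : ℝ) ^ (-s) := Hexp.unique Hp
  rw [← h2, Real.log_exp]

lemma P_sub_log_bound (s : ℝ) (hs : 1 < s) (hs2 : s ≤ 2) :
    |(∑' p : Nat.Primes, ((p : ℕ) : ℝ) ^ (-s)) -
      ∑' p : Nat.Primes, -Real.log (1 - ((p : ℕ) : ℝ) ^ (-s))| ≤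
      2 * ∑' p : Nat.Primes, ((p : ℕ) : ℝ) ^ (-2 : ℝ) := by
  have hP : Summable (fun p : Nat.Primes ↦ ((p : ℕ) : ℝ) ^ (-s)) :=
    Nat.Primes.summable_rpow.mpr (by linarith)
  have hL := summable_neg_log s hs
  have hK : Summable (fun p : Nat.Primes ↦ ((p : ℕ) : ℝ) ^ (-2 : ℝ)) :=
    Nat.Primes.summable_rpow.mpr (by norm_num)
  rw [← Summable.tsum_sub hP hL]
  have hbound : ∀ p : Nat.Primes,
      |((p : ℕ) : ℝ) ^ (-s) - -Real.log (1 - ((p : ℕ) : ℝ) ^ (-s))| ≤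
        2 * ((p : ℕ) : ℝ) ^ (-2 : ℝ) := by
    intro p
    set x := ((p : ℕ) : ℝ) ^ (-s) with hxdef
    have hx0 : 0 < x := prime_rpow_pos p s
    have hxh : x ≤ 1 / 2 := prime_rpow_le_half p hs.le
    have habs : |x| < 1 := by rw [abs_of_pos hx0]; linarith
    have key := Real.abs_log_sub_add_sum_range_le habs 1
    simp only [Finset.sum_range_one, pow_one, pow_succ, pow_one] at key
    -- key : |x ^ (0+1) / (0+1) + log (1 - x)| ≤ |x| * |x| / (1 - |x|)
    have h1 : x - -Real.log (1 - x) = x + Real.log (1 - x) := by ring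
    rw [h1]
    have h2 : |x| * |x| / (1 - |x|) ≤ 2 * x ^ 2 := by
      rw [abs_of_pos hx0]
      rw [div_le_iff₀ (by linarith)]
      nlinarith
    have hp1 : (1 : ℝ) ≤ ((p : ℕ) : ℝ) := by exact_mod_cast p.prop.one_lt.le
    have hx2 : x ^ 2 ≤ ((p : ℕ) : ℝ) ^ (-2 : ℝ) := by
      rw [hxdef, ← Real.rpow_natCast (((p:ℕ):ℝ) ^ (-s)) 2,
        ← Real.rpow_mul (by positivity)]
      push_cast
      exact Real.rpow_le_rpow_of_exponent_le hp1 (by nlinarith)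
    calc |x + Real.log (1 - x)| ≤ |x| * |x| / (1 - |x|) := by
          simpa using key
      _ ≤ 2 * x ^ 2 := h2
      _ ≤ 2 * ((p : ℕ) : ℝ) ^ (-2 : ℝ) := by linarith
  calc |∑' p : Nat.Primes, (((p : ℕ) : ℝ) ^ (-s) - -Real.log (1 - ((p : ℕ) : ℝ) ^ (-s)))|
      ≤ ∑' p : Nat.Primes, |((p : ℕ) : ℝ) ^ (-s) - -Real.log (1 - ((p : ℕ) : ℝ) ^ (-s))| := by
        simpa only [Real.norm_eq_abs] using
          norm_tsum_le_tsum_norm ((hP.sub hL).abs.congr fun p ↦ (Real.norm_eq_abs _).symm)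
    _ ≤ ∑' p : Nat.Primes, 2 * ((p : ℕ) : ℝ) ^ (-2 : ℝ) := by
        refine Summable.tsum_le_tsum hbound ?_ (hK.mul_left 2)
        exact (hP.sub hL).abs
    _ = 2 * ∑' p : Nat.Primes, ((p : ℕ) : ℝ) ^ (-2 : ℝ) := tsum_mul_left

lemma zeta_real_eq (s : ℝ) (hs : 1 < s) :
    riemannZeta s = ((∑' n : ℕ, (n : ℝ) ^ (-s) : ℝ) : ℂ) := by
  have hz := zeta_eq_tsum_one_div_nat_add_one_cpow (s := (s : ℂ)) (by simpa using hs)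
  rw [hz]
  have hzero : ∑' n : ℕ, (n : ℝ) ^ (-s) = ∑' n : ℕ, ((n + 1 : ℕ) : ℝ) ^ (-s) := by
    rw [Summable.tsum_eq_zero_add (Real.summable_nat_rpow.mpr (by linarith : (-s) < -1))]
    simp [Real.zero_rpow (show -s ≠ 0 by linarith)]
  rw [hzero, Complex.ofReal_tsum]
  refine (tsum_congr fun n ↦ ?_).symm
  rw [Complex.ofReal_cpow (by positivity), Complex.ofReal_neg, Complex.cpow_neg, one_div]
  push_cast
  ring_nf

lemma zeta_sum_near_one :
    ∃ δ : ℝ, 0 < δ ∧ ∀ s : ℝ, 1 < s → s < 1 + δ →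
      |(∑' n : ℕ, (n : ℝ) ^ (-s)) - 1 / (s - 1)| ≤ |Real.eulerMascheroniConstant| + 1 := by
  have T := ZetaAsymptotics.tendsto_riemannZeta_sub_one_div_nhds_right
  have hev : ∀ᶠ s : ℝ in 𝓝[>] 1,
      ‖riemannZeta s - 1 / ((s : ℂ) - 1)‖ ≤ |Real.eulerMascheroniConstant| + 1 := by
    filter_upwards [T.eventually (Metric.ball_mem_nhds _ one_pos)] with s hsb
    have h1 := norm_sub_norm_le (riemannZeta s - 1 / ((s : ℂ) - 1))
      ((Real.eulerMascheroniConstant : ℂ))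
    have h2 : ‖riemannZeta s - 1 / ((s : ℂ) - 1) - (Real.eulerMascheroniConstant : ℂ)‖ < 1 := by
      simpa [dist_eq_norm] using hsb
    have h3 : ‖((Real.eulerMascheroniConstant : ℝ) : ℂ)‖ = |Real.eulerMascheroniConstant| := by
      rw [Complex.norm_real, Real.norm_eq_abs]
    linarith
  obtain ⟨u, hu1, hsub⟩ := mem_nhdsGT_iff_exists_Ioo_subset.mp hev
  refine ⟨u - 1, by linarith [hu1.out], fun s hs1 hs2 ↦ ?_⟩
  have hb := hsub (⟨hs1, by linarith⟩ : s ∈ Set.Ioo (1 : ℝ) u)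
  simp only [Set.mem_setOf_eq] at hb
  rw [zeta_real_eq s hs1] at hb
  have heq : ((∑' n : ℕ, (n : ℝ) ^ (-s) : ℝ) : ℂ) - 1 / ((s : ℂ) - 1) =
      (((∑' n : ℕ, (n : ℝ) ^ (-s)) - 1 / (s - 1) : ℝ) : ℂ) := by push_cast; ring
  rw [heq, Complex.norm_real, Real.norm_eq_abs] at hb
  exact hb

/-- As `s → 1⁺`, the prime zeta function satisfies `P(s) = log(1/(s-1)) + O(1)`. -/
theorem primeZeta_log_asymptotic :
    ∃ C : ℝ, 0 < C ∧ ∃ δ : ℝ, 0 < δ ∧ ∀ s : ℝ, 1 < s → s < 1 + δ →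
      |(∑' p : Nat.Primes, ((p : ℕ) : ℝ) ^ (-s)) - Real.log (1 / (s - 1))| ≤ C := by
  obtain ⟨δ₁, hδ₁, hB⟩ := zeta_sum_near_one
  set B : ℝ := |Real.eulerMascheroniConstant| + 1 with hBdef
  have hB0 : 0 < B := by positivity
  set K : ℝ := ∑' p : Nat.Primes, ((p : ℕ) : ℝ) ^ (-2 : ℝ) with hKdef
  have hK0 : 0 ≤ K :=
    tsum_nonneg fun p ↦ Real.rpow_nonneg (Nat.cast_nonneg _) _
  refine ⟨2 * K + Real.log 2, by positivity, min (min δ₁ 1) (1 / (2 * B)),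
    by positivity, fun s hs1 hs2 ↦ ?_⟩
  have hmin1 : min (min δ₁ 1) (1 / (2 * B)) ≤ δ₁ := (min_le_left _ _).trans (min_le_left _ _)
  have hmin2 : min (min δ₁ 1) (1 / (2 * B)) ≤ 1 := (min_le_left _ _).trans (min_le_right _ _)
  have hmin3 : min (min δ₁ 1) (1 / (2 * B)) ≤ 1 / (2 * B) := min_le_right _ _
  have hsδ₁ : s < 1 + δ₁ := by linarith
  have hs2' : s ≤ 2 := by linarith
  have hZB := hB s hs1 hsδ₁
  set Z : ℝ := ∑' n : ℕ, (n : ℝ) ^ (-s) with hZdef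
  set a : ℝ := 1 / (s - 1) with hadef
  have hs10 : 0 < s - 1 := by linarith
  have ha0 : 0 < a := by positivity
  have haB : 2 * B ≤ a := by
    rw [hadef, le_div_iff₀ hs10]
    have h1 : s - 1 ≤ 1 / (2 * B) := by linarith
    calc 2 * B * (s - 1) ≤ 2 * B * (1 / (2 * B)) := by
          exact mul_le_mul_of_nonneg_left h1 (by positivity)
      _ = 1 := by field_simp
  have hZlo : a / 2 ≤ Z := by
    have := abs_le.mp hZB
    linarith [this.1]
  have hZhi : Z ≤ 2 * a := by
    have := abs_le.mp hZB
    linarith [this.2]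
  have hZ0 : 0 < Z := by linarith
  have hlog_up : Real.log Z ≤ Real.log a + Real.log 2 := by
    calc Real.log Z ≤ Real.log (2 * a) := Real.log_le_log hZ0 hZhi
      _ = Real.log 2 + Real.log a := Real.log_mul (by norm_num) (by positivity)
      _ = Real.log a + Real.log 2 := by ring
  have hlog_lo : Real.log a - Real.log 2 ≤ Real.log Z := by
    have h1 : Real.log (a / 2) ≤ Real.log Z := Real.log_le_log (by positivity) hZlo
    rwa [Real.log_div (by positivity) (by norm_num)] at h1
  have hlogZ : |Real.log Z - Real.log a| ≤ Real.log 2 := abs_le.mpr ⟨by linarith, by linarith⟩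
  have hlogeq : Real.log Z = ∑' p : Nat.Primes, -Real.log (1 - ((p : ℕ) : ℝ) ^ (-s)) :=
    log_zeta_eq s hs1
  have hPL := P_sub_log_bound s hs1 hs2'
  calc |(∑' p : Nat.Primes, ((p : ℕ) : ℝ) ^ (-s)) - Real.log a|
      = |((∑' p : Nat.Primes, ((p : ℕ) : ℝ) ^ (-s)) -
          ∑' p : Nat.Primes, -Real.log (1 - ((p : ℕ) : ℝ) ^ (-s))) +
          (Real.log Z - Real.log a)| := by rw [hlogeq]; ring_nf
    _ ≤ |(∑' p : Nat.Primes, ((p : ℕ) : ℝ) ^ (-s)) -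
          ∑' p : Nat.Primes, -Real.log (1 - ((p : ℕ) : ℝ) ^ (-s))| +
          |Real.log Z - Real.log a| := abs_add_le _ _
    _ ≤ 2 * K + Real.log 2 := add_le_add hPL hlogZ
end
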